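/- Let p = 5 or p = 7 and let k ≥ 4 be an even integer. For every θ with 0 < θ < π, the complex number F*_{k,p,1}(θ) := e^{ikθ/2} · E*_{k,p}(e^{iθ}/√p) is real, i.e. its imaginary part is zero. -/

import Mathlib

open Complex

/-- The weight-`k` Eisenstein series for `SL₂(ℤ)`:
`E_k(z) = (1/2) ∑_{(c,d) coprime} (cz+d)^{-k}`. -/
noncomputable def Ek (k : ℕ) (z : ℂ) : ℂ :=
  (1 / 2) * ∑' q : {q : ℤ × ℤ // Int.gcd q.1 q.2 = 1},
    (((q : ℤ × ℤ).1 : ℂ) * z + ((q : ℤ × ℤ).2 : ℂ)) ^ (-(k : ℤ))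

/-- The Eisenstein series associated with the Fricke group `Γ₀*(p)`:
`E*_{k,p}(z) = (p^{k/2} E_k(pz) + E_k(z)) / (p^{k/2} + 1)`. -/
noncomputable def EkStar (k p : ℕ) (z : ℂ) : ℂ :=
  ((p : ℂ) ^ (k / 2) * Ek k ((p : ℂ) * z) + Ek k z) / ((p : ℂ) ^ (k / 2) + 1)

def negFstEquiv : {q : ℤ × ℤ // Int.gcd q.1 q.2 = 1} ≃ {q : ℤ × ℤ // Int.gcd q.1 q.2 = 1} where
  toFun q := ⟨(-q.1.1, q.1.2), by simpa [Int.gcd, Int.natAbs_neg] using q.2⟩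
  invFun q := ⟨(-q.1.1, q.1.2), by simpa [Int.gcd, Int.natAbs_neg] using q.2⟩
  left_inv q := by ext : 2 <;> simp
  right_inv q := by ext : 2 <;> simp

def swapEquiv : {q : ℤ × ℤ // Int.gcd q.1 q.2 = 1} ≃ {q : ℤ × ℤ // Int.gcd q.1 q.2 = 1} where
  toFun q := ⟨(q.1.2, -q.1.1), by simpa [Int.gcd, Int.natAbs_neg, Nat.gcd_comm] using q.2⟩
  invFun q := ⟨(-q.1.2, q.1.1), by simpa [Int.gcd, Int.natAbs_neg, Nat.gcd_comm] using q.2⟩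
  left_inv q := by ext : 2 <;> simp
  right_inv q := by ext : 2 <;> simp

lemma Ek_conj (k : ℕ) (z : ℂ) :
    (starRingEnd ℂ) (Ek k z) = Ek k (-((starRingEnd ℂ) z)) := by
  unfold Ek
  rw [map_mul, map_div₀, map_one, map_ofNat]
  congr 1
  rw [show ((starRingEnd ℂ) (∑' q : {q : ℤ × ℤ // Int.gcd q.1 q.2 = 1},
      (((q : ℤ × ℤ).1 : ℂ) * z + ((q : ℤ × ℤ).2 : ℂ)) ^ (-(k : ℤ)))) =
      star (∑' q : {q : ℤ × ℤ // Int.gcd q.1 q.2 = 1},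
      (((q : ℤ × ℤ).1 : ℂ) * z + ((q : ℤ × ℤ).2 : ℂ)) ^ (-(k : ℤ))) from rfl,
    tsum_star]
  rw [← negFstEquiv.tsum_eq (fun q : {q : ℤ × ℤ // Int.gcd q.1 q.2 = 1} =>
      (((q : ℤ × ℤ).1 : ℂ) * (-((starRingEnd ℂ) z)) + ((q : ℤ × ℤ).2 : ℂ)) ^ (-(k : ℤ)))]
  congr 1
  ext q
  show star _ = _
  rw [show (star ((((q : ℤ × ℤ).1 : ℂ) * z + ((q : ℤ × ℤ).2 : ℂ)) ^ (-(k : ℤ)))) =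
      (starRingEnd ℂ) ((((q : ℤ × ℤ).1 : ℂ) * z + ((q : ℤ × ℤ).2 : ℂ)) ^ (-(k : ℤ))) from rfl,
    map_zpow₀, map_add, map_mul, map_intCast, map_intCast]
  simp [negFstEquiv]

lemma Ek_inv (k : ℕ) (z : ℂ) (hz : z ≠ 0) :
    Ek k (-1 / z) = z ^ (k : ℤ) * Ek k z := by
  unfold Ek
  rw [mul_left_comm]
  congr 1
  rw [← tsum_mul_left]
  rw [← swapEquiv.tsum_eq (fun q : {q : ℤ × ℤ // Int.gcd q.1 q.2 = 1} =>
      z ^ (k : ℤ) * ((((q : ℤ × ℤ).1 : ℂ) * z + ((q : ℤ × ℤ).2 : ℂ)) ^ (-(k : ℤ))))]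
  congr 1
  ext q
  simp only [swapEquiv, Equiv.coe_fn_mk, Int.cast_neg]
  have h1 : ((q : ℤ × ℤ).1 : ℂ) * (-1 / z) + ((q : ℤ × ℤ).2 : ℂ)
      = (((q : ℤ × ℤ).2 : ℂ) * z + -((q : ℤ × ℤ).1 : ℂ)) / z := by
    field_simp; ring
  rw [h1, div_zpow, zpow_neg z, div_inv_eq_mul]
  ring

lemma EkStar_conj (k p : ℕ) (z : ℂ) :
    (starRingEnd ℂ) (EkStar k p z) = EkStar k p (-((starRingEnd ℂ) z)) := by
  unfold EkStar
  rw [map_div₀, map_add, map_mul, map_pow, map_natCast, map_add, map_pow, map_natCast, map_one,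
    Ek_conj, Ek_conj]
  congr 3
  rw [map_mul, map_natCast]
  ring

lemma EkStar_fricke (k m p : ℕ) (hm : k = m + m) (z : ℂ) (hz : z ≠ 0)
    (hp : (p : ℂ) ≠ 0) :
    EkStar k p (-1 / ((p : ℂ) * z)) = (p : ℂ) ^ (k / 2) * z ^ k * EkStar k p z := by
  have hpz : (p : ℂ) * z ≠ 0 := mul_ne_zero hp hz
  have h1 : (p : ℂ) * (-1 / ((p : ℂ) * z)) = -1 / z := by field_simp
  have hk2 : k / 2 = m := by omega
  unfold EkStar
  rw [h1, Ek_inv k z hz, Ek_inv k _ hpz, hk2, zpow_natCast, zpow_natCast, mul_pow, hm,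
    ← mul_div_assoc]
  congr 1
  rw [pow_add]
  ring

theorem stmt0 (p : ℕ) (hp : p = 5 ∨ p = 7) (k : ℕ) (hk : 4 ≤ k) (hke : Even k)
    (θ : ℝ) (hθ1 : 0 < θ) (hθ2 : θ < Real.pi) :
    (Complex.exp (I * k * θ / 2) *
      EkStar k p (Complex.exp (I * θ) / (Real.sqrt p : ℂ))).im = 0 := by
  obtain ⟨m, hm⟩ := hke
  have hppos' : 0 < p := by rcases hp with h | h <;> omega
  have hppos : (0 : ℝ) < p := by exact_mod_cast hppos'
  have hpne : (p : ℂ) ≠ 0 := by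
    simpa using (Nat.cast_ne_zero (R := ℂ)).mpr (by omega : p ≠ 0)
  have hsR : Real.sqrt p ≠ 0 := by positivity
  have hs : (Real.sqrt p : ℂ) ≠ 0 := Complex.ofReal_ne_zero.mpr hsR
  have hs2 : (Real.sqrt p : ℂ) ^ 2 = (p : ℂ) := by
    rw [← Complex.ofReal_pow, Real.sq_sqrt hppos.le, Complex.ofReal_natCast]
  set z : ℂ := Complex.exp (I * θ) / (Real.sqrt p : ℂ) with hzdef
  have hz : z ≠ 0 := div_ne_zero (Complex.exp_ne_zero _) hs
  have hconj_exp : (starRingEnd ℂ) (Complex.exp (I * θ)) = Complex.exp (-(I * θ)) := by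
    rw [← Complex.exp_conj]; congr 1; simp
  have hconjz : -((starRingEnd ℂ) z) = -1 / ((p : ℂ) * z) := by
    rw [hzdef, map_div₀, hconj_exp, Complex.conj_ofReal, Complex.exp_neg, ← hs2]
    have he := Complex.exp_ne_zero (I * (θ : ℂ))
    field_simp
  have hcoef : (starRingEnd ℂ) (Complex.exp (I * k * θ / 2)) * ((p : ℂ) ^ (k / 2) * z ^ k)
      = Complex.exp (I * k * θ / 2) := by
    have hsk : (Real.sqrt p : ℂ) ^ k = (p : ℂ) ^ (k / 2) := by
      rw [hm, show (m + m) / 2 = m from by omega, ← two_mul, pow_mul, hs2]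
    have h1 : (p : ℂ) ^ (k / 2) * z ^ k = Complex.exp (I * θ) ^ k := by
      rw [hzdef, div_pow, hsk]
      field_simp
    rw [h1, ← Complex.exp_nat_mul, ← Complex.exp_conj,
      show (starRingEnd ℂ) (I * k * θ / 2) = -(I * k * θ / 2) by
        rw [map_div₀, map_ofNat]; simp [neg_div],
      ← Complex.exp_add]
    congr 1
    ring
  have key : (starRingEnd ℂ) (Complex.exp (I * k * θ / 2) * EkStar k p z)
      = Complex.exp (I * k * θ / 2) * EkStar k p z := by
    rw [map_mul, EkStar_conj, hconjz, EkStar_fricke k m p hm z hz hpne]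
    rw [← mul_assoc, hcoef]
  exact Complex.conj_eq_iff_im.mp key
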